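/- arXiv:1307.3280 — 2 statements merged into one kernel-verified Lean document; each statement's English description precedes it below -/
import Mathlib

section
/- The formal power series f(r) in the variables r satisfying the tree recursion f = r·ζ₂ − Σ_{k≥2} f^k·f̂^{k−1} + ζ₂·Σ_{k≥2} r^k·f̂^{k−1} and f̂ = r·ζ₁ − Σ_{k≥2} f̂^k·f^{k−1} + ζ₁·Σ_{k≥2} r^k·f^{k−1} satisfy f/(1−f·f̂) = r·ζ₂/(1−r·f̂) and f̂/(1−f·f̂) = r·ζ₁/(1−r·f). -/
open PowerSeries

private lemma tree_aux (ζ : ℝ) (f fh : PowerSeries ℝ)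
    (hf0 : constantCoeff f = 0) (hfh0 : constantCoeff fh = 0)
    (hf : f = C ζ * X - f ^ 2 * fh * (1 - f * fh)⁻¹
          + C ζ * (X ^ 2 * fh * (1 - X * fh)⁻¹)) :
    f * (1 - f * fh)⁻¹ = C ζ * X * (1 - X * fh)⁻¹ := by
  have hc1 : constantCoeff (1 - f * fh) ≠ 0 := by
    simp [map_sub, map_mul, hf0]
  have hc2 : constantCoeff (1 - X * fh) ≠ 0 := by
    simp [map_sub, map_mul, hfh0]
  have hA : (1 - f * fh) * (1 - f * fh)⁻¹ = 1 :=
    PowerSeries.mul_inv_cancel _ hc1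
  have hB : (1 - X * fh) * (1 - X * fh)⁻¹ = 1 :=
    PowerSeries.mul_inv_cancel _ hc2
  have key : f * (1 - X * fh) = C ζ * X * (1 - f * fh) := by
    linear_combination (1 - f * fh) * (1 - X * fh) * hf
      - f ^ 2 * fh * (1 - X * fh) * hA
      + C ζ * X ^ 2 * fh * (1 - f * fh) * hB
  linear_combination (1 - f * fh)⁻¹ * (1 - X * fh)⁻¹ * key
    + C ζ * X * (1 - X * fh)⁻¹ * hA
    - f * (1 - f * fh)⁻¹ * hB

/-- The tree recursions `f = rζ₂ − Σ_{k≥2} f^k f̂^{k−1} + ζ₂ Σ_{k≥2} r^k f̂^{k−1}` and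
`f̂ = rζ₁ − Σ_{k≥2} f̂^k f^{k−1} + ζ₁ Σ_{k≥2} r^k f^{k−1}` (with the geometric series
summed in closed form) imply `f/(1−f f̂) = rζ₂/(1−r f̂)` and `f̂/(1−f f̂) = rζ₁/(1−r f)`. -/
theorem tree_recursion_simplification (ζ₁ ζ₂ : ℝ) (hζ : ζ₁ + ζ₂ = 1)
    (f fh : PowerSeries ℝ)
    (hf0 : constantCoeff f = 0) (hfh0 : constantCoeff fh = 0)
    (hf : f = C ζ₂ * X - f ^ 2 * fh * (1 - f * fh)⁻¹
          + C ζ₂ * (X ^ 2 * fh * (1 - X * fh)⁻¹))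
    (hfh : fh = C ζ₁ * X - fh ^ 2 * f * (1 - f * fh)⁻¹
          + C ζ₁ * (X ^ 2 * f * (1 - X * f)⁻¹)) :
    f * (1 - f * fh)⁻¹ = C ζ₂ * X * (1 - X * fh)⁻¹ ∧
    fh * (1 - f * fh)⁻¹ = C ζ₁ * X * (1 - X * f)⁻¹ := by
  constructor
  · exact tree_aux ζ₂ f fh hf0 hfh0 hf
  · have h := tree_aux ζ₁ fh f hfh0 hf0 (by rw [mul_comm fh f]; exact hfh)
    rwa [mul_comm fh f] at h
end

section
/- If f and f̂ are formal power series with zero constant term satisfying f/(1−f·f̂) = r·ζ₂/(1−r·f̂) and f̂/(1−f·f̂) = r·ζ₁/(1−r·f), with ζ₁+ζ₂=1, then h := f·f̂ satisfies the quadratic equation s·ξ·h² + (s − 2sξ − 1)·h + s·ξ = 0, where s = r² and ξ = ζ₁ζ₂. -/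
open PowerSeries

/-- If `f/(1−f f̂) = rζ₂/(1−r f̂)` and `f̂/(1−f f̂) = rζ₁/(1−r f)` with `ζ₁+ζ₂ = 1`,
then `h = f f̂` satisfies `sξh² + (s − 2sξ − 1)h + sξ = 0` where `s = r²`, `ξ = ζ₁ζ₂`. -/
theorem h_quadratic (ζ₁ ζ₂ : ℝ) (hζ : ζ₁ + ζ₂ = 1)
    (f fh : PowerSeries ℝ)
    (hf0 : constantCoeff f = 0) (hfh0 : constantCoeff fh = 0)
    (h1 : f * (1 - f * fh)⁻¹ = C ζ₂ * X * (1 - X * fh)⁻¹)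
    (h2 : fh * (1 - f * fh)⁻¹ = C ζ₁ * X * (1 - X * f)⁻¹) :
    C (ζ₁ * ζ₂) * X ^ 2 * (f * fh) ^ 2
      + (X ^ 2 - 2 * C (ζ₁ * ζ₂) * X ^ 2 - 1) * (f * fh)
      + C (ζ₁ * ζ₂) * X ^ 2 = 0 := by
  have hu : (1 - f * fh) * (1 - f * fh)⁻¹ = 1 :=
    PowerSeries.mul_inv_cancel _ (by simp [hf0, hfh0])
  have hv : (1 - X * fh) * (1 - X * fh)⁻¹ = 1 :=
    PowerSeries.mul_inv_cancel _ (by simp [hfh0])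
  have hw : (1 - X * f) * (1 - X * f)⁻¹ = 1 :=
    PowerSeries.mul_inv_cancel _ (by simp [hf0])
  have e1 : f * (1 - X * fh) = C ζ₂ * X * (1 - f * fh) := by
    linear_combination ((1 - f * fh) * (1 - X * fh)) * h1
      - (f * (1 - X * fh)) * hu + (C ζ₂ * X * (1 - f * fh)) * hv
  have e2 : fh * (1 - X * f) = C ζ₁ * X * (1 - f * fh) := by
    linear_combination ((1 - f * fh) * (1 - X * f)) * h2
      - (fh * (1 - X * f)) * hu + (C ζ₁ * X * (1 - f * fh)) * hw
  have hζC : C ζ₁ + C ζ₂ = 1 := by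
    rw [← map_add, hζ, map_one]
  rw [show C (ζ₁ * ζ₂) = C ζ₁ * C ζ₂ from map_mul _ _ _]
  linear_combination
    (-(fh * (1 - X * f) - C ζ₁ * X * (1 - f * fh))
      - C ζ₁ * X * (1 - f * fh) - X * (f * fh)) * e1
    + (- C ζ₂ * X * (1 - f * fh) - X * (f * fh)) * e2
    - (X * (f * fh) * (X - X * (f * fh))) * hζC
end
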